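/- arXiv:1411.7801 — 2 statements merged into one kernel-verified Lean document; each statement's English description precedes it below -/
import Mathlib

section
/- Assume the block setup and QR setup, suppose F_{j−1}^{(G)} has rank L, let N̂_j† denote the Moore–Penrose pseudoinverse of N̂_j, and let X̃_j^{(F)} := X_{j−1}^{(G)} + W_j·[−R_{j−1}^{−1} Z_j N̂_j† Ĉ_j; N̂_j† Ĉ_j] be the j-th generalized block FOM iterate. Then block GMRES totally stagnates at step j (X_j^{(G)} = X_{j−1}^{(G)}) if and only if X̃_j^{(F)} = X_{j−1}^{(G)}. -/
open Matrix

noncomputable section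

set_option maxHeartbeats 1000000

/-- Squared Frobenius norm of a complex matrix. -/
def frobSq {a b : Type*} [Fintype a] [Fintype b] (M : Matrix a b ℂ) : ℝ :=
  ∑ r, ∑ c, Complex.normSq (M r c)

/-- The four Moore–Penrose conditions. -/
def IsMoorePenrose {a b : Type*} [Fintype a] [Fintype b]
    (M : Matrix a b ℂ) (P : Matrix b a ℂ) : Prop :=
  M * P * M = M ∧ P * M * P = P ∧ (M * P)ᴴ = M * P ∧ (P * M)ᴴ = P * M

/-- The block Krylov subspace `𝕂_i(A, F)`: the span of all columns of
`F, A F, …, A^(i-1) F`. -/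
def blockKrylov {n L : ℕ} (A : Matrix (Fin n) (Fin n) ℂ)
    (F : Matrix (Fin n) (Fin L) ℂ) (i : ℕ) : Submodule ℂ (Fin n → ℂ) :=
  Submodule.span ℂ { v | ∃ k < i, ∃ c : Fin L, v = fun r => (A ^ k * F) r c }

/-- `E_L^{[mL]}` : the first `L` columns of the `mL × mL` identity matrix
(block row indexing). -/
def EL (m L : ℕ) : Matrix (Fin m × Fin L) (Fin L) ℂ :=
  Matrix.of fun r c => if (r.1 : ℕ) = 0 ∧ r.2 = c then 1 else 0

/-- An `L × L` matrix is upper triangular. -/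
def utL {L : ℕ} (M : Matrix (Fin L) (Fin L) ℂ) : Prop :=
  ∀ a b : Fin L, (b : ℕ) < (a : ℕ) → M a b = 0

/-- A block-indexed `mL × mL` matrix is upper triangular. -/
def utBig {m L : ℕ} (M : Matrix (Fin m × Fin L) (Fin m × Fin L) ℂ) : Prop :=
  ∀ r c : Fin m × Fin L, (c.1 : ℕ) * L + (c.2 : ℕ) < (r.1 : ℕ) * L + (r.2 : ℕ) → M r c = 0

/-- Stack a block-tall matrix on top of an extra block row. -/
def vcat {m L : ℕ} {col : Type*} (T : Matrix (Fin m × Fin L) col ℂ)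
    (Bo : Matrix (Fin L) col ℂ) : Matrix (Fin (m+1) × Fin L) col ℂ :=
  Matrix.of fun r cc => if h : (r.1 : ℕ) < m then T (⟨r.1, h⟩, r.2) cc else Bo r.2 cc

/-- The block matrix `[[R, Z], [0, N]]`. -/
def twoBlock {m L : ℕ} (R : Matrix (Fin m × Fin L) (Fin m × Fin L) ℂ)
    (Z : Matrix (Fin m × Fin L) (Fin L) ℂ) (N : Matrix (Fin L) (Fin L) ℂ) :
    Matrix (Fin (m+1) × Fin L) (Fin (m+1) × Fin L) ℂ :=
  Matrix.of fun r c =>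
    if hr : (r.1 : ℕ) < m then
      if hc : (c.1 : ℕ) < m then R (⟨r.1, hr⟩, r.2) (⟨c.1, hc⟩, c.2)
      else Z (⟨r.1, hr⟩, r.2) c.2
    else
      if (c.1 : ℕ) < m then 0 else N r.2 c.2

/-- The block matrix `[[R, Z], [0, Hmid], [0, Hbot]]`. -/
def threeBlock {m L : ℕ} (R : Matrix (Fin m × Fin L) (Fin m × Fin L) ℂ)
    (Z : Matrix (Fin m × Fin L) (Fin L) ℂ) (Hmid Hbot : Matrix (Fin L) (Fin L) ℂ) :
    Matrix (Fin (m+2) × Fin L) (Fin (m+1) × Fin L) ℂ :=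
  Matrix.of fun r c =>
    if hr : (r.1 : ℕ) < m then
      if hc : (c.1 : ℕ) < m then R (⟨r.1, hr⟩, r.2) (⟨c.1, hc⟩, c.2)
      else Z (⟨r.1, hr⟩, r.2) c.2
    else
      if (c.1 : ℕ) < m then 0
      else if (r.1 : ℕ) = m then Hmid r.2 c.2 else Hbot r.2 c.2

/-- `diag(Q, I_L)` : extend a block-indexed square matrix by an identity block. -/
def extendOne {m L : ℕ} (Q : Matrix (Fin m × Fin L) (Fin m × Fin L) ℂ) :
    Matrix (Fin (m+1) × Fin L) (Fin (m+1) × Fin L) ℂ :=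
  Matrix.of fun r c =>
    if hr : (r.1 : ℕ) < m then
      if hc : (c.1 : ℕ) < m then Q (⟨r.1, hr⟩, r.2) (⟨c.1, hc⟩, c.2) else 0
    else
      if (c.1 : ℕ) < m then 0 else if r.2 = c.2 then 1 else 0

/-- `diag(I_{mL}, Q)` : an identity block, then `Q` in the bottom right corner. -/
def extendBot {m L : ℕ} (Q : Matrix (Fin L) (Fin L) ℂ) :
    Matrix (Fin (m+1) × Fin L) (Fin (m+1) × Fin L) ℂ :=
  Matrix.of fun r c =>
    if (r.1 : ℕ) < m ∨ (c.1 : ℕ) < m then (if r = c then 1 else 0)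
    else Q r.2 c.2

/-- The `(m+2)L × (m+2)L` matrix which is the identity outside of its trailing
principal `2L × 2L` block, which is `[[Q11, Q12], [Q21, Q22]]`. -/
def trailingTwo {m L : ℕ} (Q11 Q12 Q21 Q22 : Matrix (Fin L) (Fin L) ℂ) :
    Matrix (Fin (m+2) × Fin L) (Fin (m+2) × Fin L) ℂ :=
  Matrix.of fun r c =>
    if (r.1 : ℕ) < m ∨ (c.1 : ℕ) < m then (if r = c then 1 else 0)
    else if (r.1 : ℕ) = m then
      (if (c.1 : ℕ) = m then Q11 r.2 c.2 else Q12 r.2 c.2)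
    else
      (if (c.1 : ℕ) = m then Q21 r.2 c.2 else Q22 r.2 c.2)

/-- The block matrix `[R ; 0]` (one extra zero block row below `R`). -/
def stackZero {m L : ℕ} (R : Matrix (Fin m × Fin L) (Fin m × Fin L) ℂ) :
    Matrix (Fin (m+1) × Fin L) (Fin m × Fin L) ℂ :=
  Matrix.of fun r c => if h : (r.1 : ℕ) < m then R (⟨r.1, h⟩, r.2) c else 0

/-- A breakdown-free block Arnoldi decomposition of length `j = p + 1` for the block
linear system `A X = B` with initial guess `X₀` (block size `L`). -/
structure BlockArnoldi (n L p : ℕ) : Type where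
  A : Matrix (Fin n) (Fin n) ℂ
  B : Matrix (Fin n) (Fin L) ℂ
  X0 : Matrix (Fin n) (Fin L) ℂ
  W : Matrix (Fin n) (Fin (p+2) × Fin L) ℂ
  S0 : Matrix (Fin L) (Fin L) ℂ
  Hbar : Matrix (Fin (p+2) × Fin L) (Fin (p+1) × Fin L) ℂ
  hL : 1 ≤ L
  hn : (p+2) * L ≤ n
  F0_rank : (B - A * X0).rank = L
  orth : Wᴴ * W = 1
  S0_ut : utL S0
  S0_inv : IsUnit S0
  F0_eq : B - A * X0 = (W.submatrix id fun c : Fin L => ((0 : Fin (p+2)), c)) * S0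
  span : ∀ i : ℕ, i ≤ p + 2 →
    blockKrylov A (B - A * X0) i =
      Submodule.span ℂ { v | ∃ c : Fin (p+2) × Fin L, (c.1 : ℕ) < i ∧ v = fun r => W r c }
  arnoldi : A * W.submatrix id (Prod.map Fin.castSucc id) = W * Hbar
  hess : ∀ r c, (c.1 : ℕ) + 1 < (r.1 : ℕ) → Hbar r c = 0
  sub_ut : ∀ (k : Fin (p+1)) (a b : Fin L), (b : ℕ) < (a : ℕ) → Hbar (k.succ, a) (k, b) = 0
  sub_inv : ∀ k : Fin (p+1), IsUnit (Matrix.of fun a b : Fin L => Hbar (k.succ, a) (k, b))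

namespace BlockArnoldi

variable {n L p : ℕ}

/-- `H̄_{j-1}`, the leading `jL × (j-1)L` submatrix of `H̄_j`. -/
def Hprev (D : BlockArnoldi n L p) : Matrix (Fin (p+1) × Fin L) (Fin p × Fin L) ℂ :=
  D.Hbar.submatrix (Prod.map Fin.castSucc id) (Prod.map Fin.castSucc id)

/-- `H_j`, the leading `jL × jL` submatrix of `H̄_j`. -/
def Hsq (D : BlockArnoldi n L p) : Matrix (Fin (p+1) × Fin L) (Fin (p+1) × Fin L) ℂ :=
  D.Hbar.submatrix (Prod.map Fin.castSucc id) id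

/-- `W_j = [V₁ … V_j]`. -/
def Wfull (D : BlockArnoldi n L p) : Matrix (Fin n) (Fin (p+1) × Fin L) ℂ :=
  D.W.submatrix id (Prod.map Fin.castSucc id)

/-- `W_{j-1} = [V₁ … V_{j-1}]`. -/
def Wprev (D : BlockArnoldi n L p) : Matrix (Fin n) (Fin p × Fin L) ℂ :=
  D.W.submatrix id (Prod.map (fun i : Fin p => (i.castSucc.castSucc : Fin (p+2))) id)

/-- `V_j`, the `j`-th block Arnoldi vector. -/
def Vj (D : BlockArnoldi n L p) : Matrix (Fin n) (Fin L) ℂ :=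
  D.W.submatrix id fun c : Fin L => (((Fin.last p).castSucc : Fin (p+2)), c)

end BlockArnoldi

/-- `Y` is the unique minimizer of `‖Hb • Y' - T‖_F` over all `Y'`. -/
def IsUniqueFrobMin {a b c : Type*} [Fintype a] [Fintype b] [Fintype c]
    (Hb : Matrix a b ℂ) (T : Matrix a c ℂ) (Y : Matrix b c ℂ) : Prop :=
  (∀ Y', frobSq (Hb * Y - T) ≤ frobSq (Hb * Y' - T)) ∧
  ∀ Y', (∀ Y'', frobSq (Hb * Y' - T) ≤ frobSq (Hb * Y'' - T)) → Y' = Y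

/-- `Y_j^{(G)}` is the solution of the `j`-th block GMRES least-squares subproblem. -/
def IsBlockGMRESj {n L p : ℕ} (D : BlockArnoldi n L p)
    (Y : Matrix (Fin (p+1) × Fin L) (Fin L) ℂ) : Prop :=
  IsUniqueFrobMin D.Hbar (EL (p+2) L * D.S0) Y

/-- `Y_{j-1}^{(G)}` is the solution of the `(j-1)`-st block GMRES least-squares
subproblem. -/
def IsBlockGMRESprev {n L p : ℕ} (D : BlockArnoldi n L p)
    (Y : Matrix (Fin p × Fin L) (Fin L) ℂ) : Prop :=
  IsUniqueFrobMin D.Hprev (EL (p+1) L * D.S0) Y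

/-- The QR setup at step `j = p+1` : a QR factorization `Q̄_{j-1} H̄_{j-1} = [R_{j-1}; 0]`
from the previous step, the induced splitting
`diag(Q̄_{j-1}, I_L)·H̄_j = [[R,Z],[0,Ĥ_{jj}],[0,H_{j+1,j}]]`, the unitary `Q_j`
(identity outside its trailing principal `2L×2L` block) completing the
QR factorization of `H̄_j`, and the unitary `Q̂_j^{(b)}` triangularizing `Ĥ_{jj}`. -/
structure QRSetup (L p : ℕ) (Hbar : Matrix (Fin (p+2) × Fin L) (Fin (p+1) × Fin L) ℂ)
    (S0 : Matrix (Fin L) (Fin L) ℂ) : Type where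
  Qbar : Matrix (Fin (p+1) × Fin L) (Fin (p+1) × Fin L) ℂ
  R : Matrix (Fin p × Fin L) (Fin p × Fin L) ℂ
  Z : Matrix (Fin p × Fin L) (Fin L) ℂ
  Hhat : Matrix (Fin L) (Fin L) ℂ
  Hsub : Matrix (Fin L) (Fin L) ℂ
  Q11 : Matrix (Fin L) (Fin L) ℂ
  Q12 : Matrix (Fin L) (Fin L) ℂ
  Q21 : Matrix (Fin L) (Fin L) ℂ
  Q22 : Matrix (Fin L) (Fin L) ℂ
  N : Matrix (Fin L) (Fin L) ℂ
  Qhatb : Matrix (Fin L) (Fin L) ℂ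
  Nhat : Matrix (Fin L) (Fin L) ℂ
  Qbar_unit : Qbarᴴ * Qbar = 1
  Qbar_base : p = 0 → Qbar = 1
  R_ut : utBig R
  R_inv : IsUnit R
  qr_prev : Qbar * Hbar.submatrix (Prod.map Fin.castSucc id) (Prod.map Fin.castSucc id)
      = stackZero R
  qr_split : extendOne Qbar * Hbar = threeBlock R Z Hhat Hsub
  Qj_unit : (trailingTwo (m := p) Q11 Q12 Q21 Q22)ᴴ * trailingTwo (m := p) Q11 Q12 Q21 Q22 = 1
  qr_full : trailingTwo (m := p) Q11 Q12 Q21 Q22 * (extendOne Qbar * Hbar)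
      = threeBlock R Z N 0
  N_ut : utL N
  N_inv : IsUnit N
  Qhatb_unit : Qhatbᴴ * Qhatb = 1
  Nhat_def : Nhat = Qhatb * Hhat
  Nhat_ut : utL Nhat

namespace QRSetup

variable {L p : ℕ} {Hbar : Matrix (Fin (p+2) × Fin L) (Fin (p+1) × Fin L) ℂ}
  {S0 : Matrix (Fin L) (Fin L) ℂ}

/-- `C̃_j` : the last `L` rows of `Q̄_{j-1} E_L^{[jL]} S₀`. -/
def Ct (S : QRSetup L p Hbar S0) : Matrix (Fin L) (Fin L) ℂ :=
  Matrix.of fun a b => (S.Qbar * (EL (p+1) L * S0)) ((Fin.last p), a) b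

/-- `C_j := Q_j^{(11)} C̃_j`. -/
def C (S : QRSetup L p Hbar S0) : Matrix (Fin L) (Fin L) ℂ := S.Q11 * S.Ct

/-- `Ĉ_j := Q̂_j^{(b)} C̃_j`. -/
def Chat (S : QRSetup L p Hbar S0) : Matrix (Fin L) (Fin L) ℂ := S.Qhatb * S.Ct

end QRSetup

section AuxStmt14

variable {L m : ℕ} {col : Type*}

/-- Decomposition of `Fin (m+1) × Fin L` as a sum: the first `m` blocks plus the last block. -/
def esum (m L : ℕ) : (Fin m × Fin L) ⊕ Fin L ≃ Fin (m + 1) × Fin L where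
  toFun s := Sum.elim (fun x : Fin m × Fin L => (x.1.castSucc, x.2)) (fun a => (Fin.last m, a)) s
  invFun r := if h : (r.1 : ℕ) < m then Sum.inl (⟨(r.1 : ℕ), h⟩, r.2) else Sum.inr r.2
  left_inv s := by
    rcases s with ⟨x1, x2⟩ | a
    · have h : ((x1.castSucc : Fin (m+1)) : ℕ) < m := by simp
      simp [dif_pos h, Fin.ext_iff]
    · have h : ¬ (((Fin.last m : Fin (m+1))) : ℕ) < m := by simp
      simp [dif_neg h]
  right_inv r := by
    by_cases h : (r.1 : ℕ) < m
    · simp only [dif_pos h, Sum.elim_inl]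
      ext <;> simp
    · simp only [dif_neg h, Sum.elim_inr]
      have hr : r.1 = Fin.last m := by
        have := r.1.isLt; ext; simp only [Fin.val_last]; omega
      rw [← hr]

@[simp] lemma esum_inl (x : Fin m × Fin L) : esum m L (Sum.inl x) = (x.1.castSucc, x.2) := rfl
@[simp] lemma esum_inr (a : Fin L) : esum m L (Sum.inr a) = (Fin.last m, a) := rfl

/-- Double decomposition of `Fin (m+2) × Fin L`. -/
def esum2 (m L : ℕ) : ((Fin m × Fin L) ⊕ Fin L) ⊕ Fin L ≃ Fin (m + 2) × Fin L :=
  (Equiv.sumCongr (esum m L) (Equiv.refl (Fin L))).trans (esum (m+1) L)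

@[simp] lemma esum2_inl_inl (x : Fin m × Fin L) :
    esum2 m L (Sum.inl (Sum.inl x)) = ((x.1.castSucc).castSucc, x.2) := rfl
@[simp] lemma esum2_inl_inr (a : Fin L) :
    esum2 m L (Sum.inl (Sum.inr a)) = ((Fin.last m).castSucc, a) := rfl
@[simp] lemma esum2_inr (a : Fin L) :
    esum2 m L (Sum.inr a) = (Fin.last (m+1), a) := rfl

lemma eq_of_submatrix_eq {a a' b : Type*} (e : a' ≃ a) {M N : Matrix a b ℂ}
    (h : M.submatrix e id = N.submatrix e id) : M = N := by
  ext r c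
  have := congrFun (congrFun h (e.symm r)) c
  simpa using this

lemma eq_of_submatrix_eq₂ {a a' b b' : Type*} (e : a' ≃ a) (f : b' ≃ b) {M N : Matrix a b ℂ}
    (h : M.submatrix e f = N.submatrix e f) : M = N := by
  ext r c
  have := congrFun (congrFun h (e.symm r)) (f.symm c)
  simpa using this

lemma rdec_mul {a a' b c : Type*} [Fintype b] (e : a' → a) (M : Matrix a b ℂ)
    (Y : Matrix b c ℂ) : (M * Y).submatrix e id = M.submatrix e id * Y := by
  ext r cc
  simp [Matrix.mul_apply]

lemma submatrix_sub'' {a a' b b' : Type*} (A B : Matrix a b ℂ) (e : a' → a) (f : b' → b) :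
    (A - B).submatrix e f = A.submatrix e f - B.submatrix e f := rfl

lemma fromRows_sub {a b c : Type*} (A A' : Matrix a c ℂ) (B B' : Matrix b c ℂ) :
    fromRows A B - fromRows A' B' = fromRows (A - A') (B - B') := by
  ext (x | x) cc <;> simp

lemma vcat_dec (T : Matrix (Fin m × Fin L) col ℂ) (Bo : Matrix (Fin L) col ℂ) :
    (vcat T Bo).submatrix (esum m L) id = fromRows T Bo := by
  ext s c
  rcases s with ⟨x1, x2⟩ | a
  · simp [vcat, Fin.is_lt]
  · simp [vcat]

lemma stackZero_dec (R : Matrix (Fin m × Fin L) (Fin m × Fin L) ℂ) :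
    (stackZero R).submatrix (esum m L) id = fromRows R 0 := by
  ext s c
  rcases s with ⟨x1, x2⟩ | a
  · simp [stackZero, Fin.is_lt]
  · simp [stackZero]

lemma EL_dec (m L : ℕ) :
    (EL (m+2) L).submatrix (esum (m+1) L) id = fromRows (EL (m+1) L) 0 := by
  ext s c
  rcases s with ⟨x1, x2⟩ | a
  · simp [EL]
  · simp [EL, Fin.val_last]

lemma extendOne_dec (Q : Matrix (Fin m × Fin L) (Fin m × Fin L) ℂ) :
    (extendOne Q).submatrix (esum m L) (esum m L) = fromBlocks Q 0 0 1 := by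
  ext s u
  rcases s with ⟨x1, x2⟩ | a <;> rcases u with ⟨y1, y2⟩ | b <;>
    simp [extendOne, Matrix.one_apply, Fin.is_lt]

lemma dec2_of_dec {M : Matrix (Fin (m+2) × Fin L) col ℂ} {A : Matrix (Fin (m+1) × Fin L) col ℂ}
    {B : Matrix (Fin L) col ℂ} (h : M.submatrix (esum (m+1) L) id = fromRows A B) :
    M.submatrix (esum2 m L) id = fromRows (A.submatrix (esum m L) id) B := by
  ext s c
  rcases s with s | a
  · have h1 := congrFun (congrFun h (Sum.inl (esum m L s))) c
    simpa [esum2] using h1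
  · have h1 := congrFun (congrFun h (Sum.inr a)) c
    simpa [esum2] using h1

lemma threeBlock_dec (R : Matrix (Fin m × Fin L) (Fin m × Fin L) ℂ)
    (Z : Matrix (Fin m × Fin L) (Fin L) ℂ) (Hmid Hbot : Matrix (Fin L) (Fin L) ℂ) :
    (threeBlock R Z Hmid Hbot).submatrix (esum2 m L) (esum m L)
      = fromRows (fromBlocks R Z 0 Hmid) (fromCols 0 Hbot) := by
  ext s u
  rcases s with (⟨x1, x2⟩ | a) | a <;> rcases u with ⟨y1, y2⟩ | b <;>
    simp [threeBlock, Fin.is_lt]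

lemma trailingTwo_dec (Q11 Q12 Q21 Q22 : Matrix (Fin L) (Fin L) ℂ) :
    (trailingTwo (m := m) Q11 Q12 Q21 Q22).submatrix (esum2 m L) (esum2 m L)
      = fromBlocks (fromBlocks 1 0 0 Q11) (fromRows 0 Q12) (fromCols 0 Q21) Q22 := by
  ext s u
  rcases s with (⟨x1, x2⟩ | a) | a <;> rcases u with (⟨y1, y2⟩ | b) | b <;>
    simp [trailingTwo, Matrix.one_apply, Prod.ext_iff, Fin.ext_iff, Fin.is_lt] <;>
    omega

end AuxStmt14

section FrobAux

lemma frobSq_eq_trace {a b : Type*} [Fintype a] [Fintype b] (M : Matrix a b ℂ) :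
    frobSq M = (Matrix.trace (Mᴴ * M)).re := by
  rw [frobSq, Matrix.trace, Finset.sum_comm, Complex.re_sum]
  refine Finset.sum_congr rfl fun c _ => ?_
  rw [Matrix.diag_apply, Matrix.mul_apply, Complex.re_sum]
  refine Finset.sum_congr rfl fun r _ => ?_
  rw [Matrix.conjTranspose_apply]
  simp [Complex.normSq_apply, Complex.mul_re]

lemma frobSq_unitary {a b : Type*} [Fintype a] [Fintype b] [DecidableEq a]
    (U : Matrix a a ℂ) (hU : Uᴴ * U = 1) (M : Matrix a b ℂ) :
    frobSq (U * M) = frobSq M := by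
  rw [frobSq_eq_trace, frobSq_eq_trace, Matrix.conjTranspose_mul, Matrix.mul_assoc,
    ← Matrix.mul_assoc Uᴴ U M, hU, Matrix.one_mul]

lemma frobSq_nonneg {a b : Type*} [Fintype a] [Fintype b] (M : Matrix a b ℂ) :
    0 ≤ frobSq M :=
  Finset.sum_nonneg fun _ _ => Finset.sum_nonneg fun _ _ => Complex.normSq_nonneg _

lemma frobSq_zero {a b : Type*} [Fintype a] [Fintype b] :
    frobSq (0 : Matrix a b ℂ) = 0 := by simp [frobSq]

lemma frobSq_eq_zero {a b : Type*} [Fintype a] [Fintype b] {M : Matrix a b ℂ}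
    (h : frobSq M = 0) : M = 0 := by
  ext r c
  have h1 := (Finset.sum_eq_zero_iff_of_nonneg
    (fun r _ => Finset.sum_nonneg fun c _ => Complex.normSq_nonneg _)).mp h r (Finset.mem_univ r)
  have h2 := (Finset.sum_eq_zero_iff_of_nonneg
    (fun c _ => Complex.normSq_nonneg _)).mp h1 c (Finset.mem_univ c)
  simpa using Complex.normSq_eq_zero.mp h2

lemma frobSq_neg {a b : Type*} [Fintype a] [Fintype b] (M : Matrix a b ℂ) :
    frobSq (-M) = frobSq M := by simp [frobSq]

lemma frobSq_rdec {a a' b : Type*} [Fintype a] [Fintype a'] [Fintype b]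
    (e : a' ≃ a) (M : Matrix a b ℂ) : frobSq (M.submatrix e id) = frobSq M := by
  rw [frobSq, frobSq, ← Equiv.sum_comp e (fun r => ∑ c, Complex.normSq (M r c))]
  rfl

lemma frobSq_fromRows {a b c : Type*} [Fintype a] [Fintype b] [Fintype c]
    (A : Matrix a c ℂ) (B : Matrix b c ℂ) :
    frobSq (fromRows A B) = frobSq A + frobSq B := by
  rw [frobSq, Fintype.sum_sum_type]
  rfl

end FrobAux

/-- Block GMRES totally stagnates at step `j`
(`X_j^(G) = X_{j-1}^(G)`) if and only if the generalized block FOM iterate satisfies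
`X̃_j^(F) = X_{j-1}^(G)`. -/
theorem stmt14 {n L p : ℕ} (D : BlockArnoldi n L p) (S : QRSetup L p D.Hbar D.S0)
    (Yj : Matrix (Fin (p+1) × Fin L) (Fin L) ℂ) (hYj : IsBlockGMRESj D Yj)
    (Yprev : Matrix (Fin p × Fin L) (Fin L) ℂ) (hYprev : IsBlockGMRESprev D Yprev)
    (hF : (D.B - D.A * (D.X0 + D.Wprev * Yprev)).rank = L)
    (Nhd : Matrix (Fin L) (Fin L) ℂ) (hNhd : IsMoorePenrose S.Nhat Nhd) :
    ∀ Xf : Matrix (Fin n) (Fin L) ℂ,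
      Xf = (D.X0 + D.Wprev * Yprev)
            + D.Wfull * vcat (-(S.R⁻¹ * S.Z * (Nhd * S.Chat))) (Nhd * S.Chat) →
    (D.X0 + D.Wfull * Yj = D.X0 + D.Wprev * Yprev ↔ Xf = D.X0 + D.Wprev * Yprev) := by
  intro Xf hXf
  classical
  obtain ⟨hm1, hm2, hm3, hm4⟩ := hNhd
  have hminPrev : ∀ Y' : Matrix (Fin p × Fin L) (Fin L) ℂ,
      frobSq (D.Hprev * Yprev - EL (p+1) L * D.S0) ≤ frobSq (D.Hprev * Y' - EL (p+1) L * D.S0) :=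
    hYprev.1
  have hminJ : ∀ Y' : Matrix (Fin (p+1) × Fin L) (Fin L) ℂ,
      frobSq (D.Hbar * Yj - EL (p+2) L * D.S0) ≤ frobSq (D.Hbar * Y' - EL (p+2) L * D.S0) :=
    hYj.1
  have hRdet : IsUnit S.R.det := (Matrix.isUnit_iff_isUnit_det _).mp S.R_inv
  have hNdet : IsUnit S.N.det := (Matrix.isUnit_iff_isUnit_det _).mp S.N_inv
  -- orthonormality of the columns of Wfull
  have hinj : Function.Injective
      (Prod.map (Fin.castSucc : Fin (p+1) → Fin (p+2)) (id : Fin L → Fin L)) :=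
    Function.Injective.prodMap (Fin.castSucc_injective _) Function.injective_id
  have hWo : D.Wfullᴴ * D.Wfull = 1 := by
    ext a b
    have h := congrFun (congrFun D.orth (Prod.map Fin.castSucc id a)) (Prod.map Fin.castSucc id b)
    simp only [Matrix.mul_apply, Matrix.conjTranspose_apply] at h ⊢
    simp only [BlockArnoldi.Wfull, Matrix.submatrix_apply, id_eq]
    rw [h]
    simp [Matrix.one_apply, hinj.eq_iff]
  have hWcancel : ∀ X Y : Matrix (Fin (p+1) × Fin L) (Fin L) ℂ,
      D.Wfull * X = D.Wfull * Y → X = Y := by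
    intro X Y h
    have h2 := congrArg (fun M => D.Wfullᴴ * M) h
    simpa [← Matrix.mul_assoc, hWo] using h2
  have hWcols : D.Wfull.submatrix id (esum p L) = fromCols D.Wprev D.Vj := by
    ext r s
    rcases s with ⟨x1, x2⟩ | a <;>
      simp [BlockArnoldi.Wfull, BlockArnoldi.Wprev, BlockArnoldi.Vj]
  have hWmul : ∀ M : Matrix (Fin (p+1) × Fin L) (Fin L) ℂ,
      D.Wfull * M = fromCols D.Wprev D.Vj * M.submatrix (esum p L) id := by
    intro M
    rw [← hWcols, Matrix.submatrix_mul_equiv D.Wfull M id (esum p L) id,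
      Matrix.submatrix_id_id]
  have hWprevY : D.Wprev * Yprev = D.Wfull * vcat Yprev 0 := by
    rw [hWmul, vcat_dec, fromCols_mul_fromRows, Matrix.mul_zero, add_zero]
  -- the data of the previous QR step
  set ELS : Matrix (Fin (p+1) × Fin L) (Fin L) ℂ := EL (p+1) L * D.S0 with hELSdef
  set t : Matrix (Fin (p+1) × Fin L) (Fin L) ℂ := S.Qbar * ELS with htdef
  set g : Matrix (Fin p × Fin L) (Fin L) ℂ :=
    Matrix.of (fun x c => t (x.1.castSucc, x.2) c) with hgdef
  have ht_dec : t.submatrix (esum p L) id = fromRows g S.Ct := by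
    ext s c
    rcases s with ⟨x1, x2⟩ | a
    · simp [hgdef]
    · simp [QRSetup.Ct, htdef, hELSdef]
  have hHprev_eq : S.Qbar * D.Hprev = stackZero S.R := S.qr_prev
  have keyPrev : ∀ Y : Matrix (Fin p × Fin L) (Fin L) ℂ,
      frobSq (D.Hprev * Y - ELS) = frobSq (S.R * Y - g) + frobSq S.Ct := by
    intro Y
    have h0 : S.Qbar * (D.Hprev * Y - ELS) = stackZero S.R * Y - t := by
      rw [Matrix.mul_sub, ← Matrix.mul_assoc, hHprev_eq, htdef]
    have h1 : (stackZero S.R * Y - t).submatrix (esum p L) id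
        = fromRows (S.R * Y - g) (0 - S.Ct) := by
      rw [submatrix_sub'', rdec_mul, stackZero_dec, Matrix.fromRows_mul,
        Matrix.zero_mul, ht_dec, fromRows_sub]
    calc frobSq (D.Hprev * Y - ELS)
        = frobSq (S.Qbar * (D.Hprev * Y - ELS)) := (frobSq_unitary _ S.Qbar_unit _).symm
      _ = frobSq (stackZero S.R * Y - t) := by rw [h0]
      _ = frobSq ((stackZero S.R * Y - t).submatrix (esum p L) id) := (frobSq_rdec _ _).symm
      _ = frobSq (fromRows (S.R * Y - g) (0 - S.Ct)) := by rw [h1]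
      _ = frobSq (S.R * Y - g) + frobSq S.Ct := by
          rw [frobSq_fromRows, zero_sub, frobSq_neg]
  -- characterization of Yprev
  have hRY : S.R * Yprev = g := by
    have hmin := hminPrev (S.R⁻¹ * g)
    rw [keyPrev, keyPrev] at hmin
    have hRRinv : S.R * (S.R⁻¹ * g) = g := by
      rw [← Matrix.mul_assoc, Matrix.mul_nonsing_inv _ hRdet, Matrix.one_mul]
    rw [hRRinv, sub_self, frobSq_zero] at hmin
    have h0 : frobSq (S.R * Yprev - g) = 0 :=
      le_antisymm (by linarith) (frobSq_nonneg _)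
    exact sub_eq_zero.mp (frobSq_eq_zero h0)
  -- the QR data of the current step
  have hE1U : (extendOne (L := L) S.Qbar)ᴴ * extendOne S.Qbar = 1 := by
    apply eq_of_submatrix_eq₂ (esum (p+1) L) (esum (p+1) L)
    rw [← Matrix.submatrix_mul_equiv (extendOne S.Qbar)ᴴ (extendOne S.Qbar)
      (⇑(esum (p+1) L)) (esum (p+1) L) (⇑(esum (p+1) L)),
      ← Matrix.conjTranspose_submatrix, extendOne_dec, Matrix.submatrix_one_equiv,
      Matrix.fromBlocks_conjTranspose, Matrix.fromBlocks_multiply]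
    simp [S.Qbar_unit, Matrix.fromBlocks_one]
  have hUU : (trailingTwo (m := p) S.Q11 S.Q12 S.Q21 S.Q22 * extendOne S.Qbar)ᴴ
      * (trailingTwo (m := p) S.Q11 S.Q12 S.Q21 S.Q22 * extendOne S.Qbar) = 1 := by
    rw [Matrix.conjTranspose_mul, Matrix.mul_assoc,
      ← Matrix.mul_assoc (trailingTwo (m := p) S.Q11 S.Q12 S.Q21 S.Q22)ᴴ,
      S.Qj_unit, Matrix.one_mul, hE1U]
  have hT_dec : (EL (p+2) L * D.S0).submatrix (esum (p+1) L) id = fromRows ELS 0 := by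
    rw [rdec_mul, EL_dec, Matrix.fromRows_mul, Matrix.zero_mul, hELSdef]
  have hG1 : (extendOne S.Qbar * (EL (p+2) L * D.S0)).submatrix (esum (p+1) L) id
      = fromRows t 0 := by
    rw [← Matrix.submatrix_mul_equiv (extendOne S.Qbar) (EL (p+2) L * D.S0)
      (⇑(esum (p+1) L)) (esum (p+1) L) id, extendOne_dec, hT_dec,
      Matrix.fromBlocks_mul_fromRows, htdef]
    simp
  have hThr : (threeBlock (m := p) S.R S.Z S.N 0).submatrix (esum2 p L) (esum p L)
      = fromRows (fromBlocks S.R S.Z 0 S.N) 0 := by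
    rw [threeBlock_dec, Matrix.fromCols_zero]
  have hQTdec : (trailingTwo (m := p) S.Q11 S.Q12 S.Q21 S.Q22).submatrix (esum2 p L) (esum2 p L)
      = fromBlocks (fromBlocks 1 0 0 S.Q11) (fromRows 0 S.Q12) (fromCols 0 S.Q21) S.Q22 :=
    trailingTwo_dec _ _ _ _
  have hG : ((trailingTwo (m := p) S.Q11 S.Q12 S.Q21 S.Q22 * extendOne S.Qbar)
      * (EL (p+2) L * D.S0)).submatrix (esum2 p L) id
      = fromRows (fromRows g S.C) (S.Q21 * S.Ct) := by
    rw [Matrix.mul_assoc,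
      ← Matrix.submatrix_mul_equiv (trailingTwo (m := p) S.Q11 S.Q12 S.Q21 S.Q22)
        (extendOne S.Qbar * (EL (p+2) L * D.S0)) (⇑(esum2 p L)) (esum2 p L) id,
      hQTdec, dec2_of_dec hG1, ht_dec, Matrix.fromBlocks_mul_fromRows,
      Matrix.mul_zero, Matrix.mul_zero, add_zero, add_zero,
      Matrix.fromBlocks_mul_fromRows, Matrix.fromCols_mul_fromRows]
    simp [QRSetup.C]
  have keyJ : ∀ Y : Matrix (Fin (p+1) × Fin L) (Fin L) ℂ,
      frobSq (D.Hbar * Y - EL (p+2) L * D.S0)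
        = frobSq (fromBlocks S.R S.Z 0 S.N * Y.submatrix (esum p L) id - fromRows g S.C)
          + frobSq (S.Q21 * S.Ct) := by
    intro Y
    have h0 : (trailingTwo (m := p) S.Q11 S.Q12 S.Q21 S.Q22 * extendOne S.Qbar)
        * (D.Hbar * Y - EL (p+2) L * D.S0)
        = threeBlock (m := p) S.R S.Z S.N 0 * Y
          - (trailingTwo (m := p) S.Q11 S.Q12 S.Q21 S.Q22 * extendOne S.Qbar)
            * (EL (p+2) L * D.S0) := by
      rw [Matrix.mul_sub, ← Matrix.mul_assoc _ D.Hbar Y,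
        Matrix.mul_assoc (trailingTwo (m := p) S.Q11 S.Q12 S.Q21 S.Q22)
          (extendOne S.Qbar) D.Hbar, S.qr_full]
    have h1 : (threeBlock (m := p) S.R S.Z S.N 0 * Y).submatrix (esum2 p L) id
        = fromRows (fromBlocks S.R S.Z 0 S.N * Y.submatrix (esum p L) id) 0 := by
      rw [← Matrix.submatrix_mul_equiv (threeBlock (m := p) S.R S.Z S.N 0) Y
        (⇑(esum2 p L)) (esum p L) id, hThr, Matrix.fromRows_mul, Matrix.zero_mul]
    calc frobSq (D.Hbar * Y - EL (p+2) L * D.S0)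
        = frobSq ((trailingTwo (m := p) S.Q11 S.Q12 S.Q21 S.Q22 * extendOne S.Qbar)
            * (D.Hbar * Y - EL (p+2) L * D.S0)) := (frobSq_unitary _ hUU _).symm
      _ = frobSq (threeBlock (m := p) S.R S.Z S.N 0 * Y
            - (trailingTwo (m := p) S.Q11 S.Q12 S.Q21 S.Q22 * extendOne S.Qbar)
              * (EL (p+2) L * D.S0)) := by rw [h0]
      _ = frobSq ((threeBlock (m := p) S.R S.Z S.N 0 * Y
            - (trailingTwo (m := p) S.Q11 S.Q12 S.Q21 S.Q22 * extendOne S.Qbar)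
              * (EL (p+2) L * D.S0)).submatrix (esum2 p L) id) := (frobSq_rdec _ _).symm
      _ = frobSq (fromRows
            (fromBlocks S.R S.Z 0 S.N * Y.submatrix (esum p L) id - fromRows g S.C)
            (0 - S.Q21 * S.Ct)) := by
          rw [submatrix_sub'', h1, hG, fromRows_sub]
      _ = _ := by rw [frobSq_fromRows, zero_sub, frobSq_neg]
  have hM2 : IsUnit (fromBlocks S.R S.Z 0 S.N).det := by
    rw [Matrix.det_fromBlocks_zero₂₁]
    exact hRdet.mul hNdet
  -- characterization of Yj
  have hYjchar : fromBlocks S.R S.Z 0 S.N * Yj.submatrix (esum p L) id = fromRows g S.C := by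
    have hYc : (vcat ((fromBlocks S.R S.Z 0 S.N)⁻¹ * fromRows g S.C).toRows₁
        ((fromBlocks S.R S.Z 0 S.N)⁻¹ * fromRows g S.C).toRows₂).submatrix (esum p L) id
        = (fromBlocks S.R S.Z 0 S.N)⁻¹ * fromRows g S.C := by
      rw [vcat_dec, Matrix.fromRows_toRows]
    have h2 : fromBlocks S.R S.Z 0 S.N
        * ((fromBlocks S.R S.Z 0 S.N)⁻¹ * fromRows g S.C) = fromRows g S.C := by
      rw [← Matrix.mul_assoc, Matrix.mul_nonsing_inv _ hM2, Matrix.one_mul]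
    have hmin := hminJ (vcat ((fromBlocks S.R S.Z 0 S.N)⁻¹ * fromRows g S.C).toRows₁
        ((fromBlocks S.R S.Z 0 S.N)⁻¹ * fromRows g S.C).toRows₂)
    rw [keyJ, keyJ, hYc, h2, sub_self, frobSq_zero] at hmin
    have h0 : frobSq (fromBlocks S.R S.Z 0 S.N * Yj.submatrix (esum p L) id - fromRows g S.C)
        = 0 := le_antisymm (by linarith) (frobSq_nonneg _)
    exact sub_eq_zero.mp (frobSq_eq_zero h0)
  have hM2cancel : ∀ X Y : Matrix ((Fin p × Fin L) ⊕ Fin L) (Fin L) ℂ,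
      fromBlocks S.R S.Z 0 S.N * X = fromBlocks S.R S.Z 0 S.N * Y → X = Y := by
    intro X Y h
    have h2 := congrArg (fun M => (fromBlocks S.R S.Z 0 S.N)⁻¹ * M) h
    simpa [← Matrix.mul_assoc, Matrix.nonsing_inv_mul _ hM2] using h2
  -- the left-hand side of the equivalence
  have h2v : fromBlocks S.R S.Z 0 S.N
      * (vcat Yprev (0 : Matrix (Fin L) (Fin L) ℂ)).submatrix (esum p L) id
      = fromRows g (0 : Matrix (Fin L) (Fin L) ℂ) := by
    rw [vcat_dec, Matrix.fromBlocks_mul_fromRows]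
    simp [hRY]
  have hLHS : (D.X0 + D.Wfull * Yj = D.X0 + D.Wprev * Yprev) ↔ S.C = 0 := by
    rw [add_right_inj, hWprevY]
    constructor
    · intro h
      have hy := hWcancel _ _ h
      have h4 : fromRows g S.C = fromRows g (0 : Matrix (Fin L) (Fin L) ℂ) := by
        rw [← hYjchar, hy, h2v]
      exact ((Matrix.fromRows_ext_iff _ _ _ _).mp h4).2
    · intro hC
      have hy : Yj = vcat Yprev 0 := by
        apply eq_of_submatrix_eq (esum p L)
        apply hM2cancel
        rw [hYjchar, h2v, hC]
      rw [hy]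
  -- the right-hand side of the equivalence
  have hRHS : (Xf = D.X0 + D.Wprev * Yprev) ↔ Nhd * S.Chat = 0 := by
    rw [hXf, add_eq_left]
    constructor
    · intro h
      have hv : vcat (-(S.R⁻¹ * S.Z * (Nhd * S.Chat))) (Nhd * S.Chat) = 0 :=
        hWcancel _ 0 (by rw [Matrix.mul_zero]; exact h)
      have h5 : fromRows (-(S.R⁻¹ * S.Z * (Nhd * S.Chat))) (Nhd * S.Chat) = 0 := by
        rw [← vcat_dec, hv]
        simp
      have h6 : fromRows (-(S.R⁻¹ * S.Z * (Nhd * S.Chat))) (Nhd * S.Chat)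
          = fromRows (0 : Matrix (Fin p × Fin L) (Fin L) ℂ)
            (0 : Matrix (Fin L) (Fin L) ℂ) := by
        rw [h5, Matrix.fromRows_zero]
      exact ((Matrix.fromRows_ext_iff _ _ _ _).mp h6).2
    · intro hK
      rw [hK]
      have hv : vcat (-(S.R⁻¹ * S.Z * (0 : Matrix (Fin L) (Fin L) ℂ)))
          (0 : Matrix (Fin L) (Fin L) ℂ) = 0 := by
        apply eq_of_submatrix_eq (esum p L)
        rw [vcat_dec]
        simp
      rw [hv, Matrix.mul_zero]
  -- relating C and Chat : Hhat = Q11ᴴ * N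
  have hsplit : trailingTwo (m := p) S.Q11 S.Q12 S.Q21 S.Q22
      * threeBlock (m := p) S.R S.Z S.Hhat S.Hsub = threeBlock (m := p) S.R S.Z S.N 0 := by
    rw [← S.qr_split]
    exact S.qr_full
  have hThrHS : threeBlock (m := p) S.R S.Z S.Hhat S.Hsub
      = (trailingTwo (m := p) S.Q11 S.Q12 S.Q21 S.Q22)ᴴ
        * threeBlock (m := p) S.R S.Z S.N 0 := by
    calc threeBlock (m := p) S.R S.Z S.Hhat S.Hsub
        = 1 * threeBlock (m := p) S.R S.Z S.Hhat S.Hsub := (Matrix.one_mul _).symm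
      _ = ((trailingTwo (m := p) S.Q11 S.Q12 S.Q21 S.Q22)ᴴ
            * trailingTwo (m := p) S.Q11 S.Q12 S.Q21 S.Q22)
            * threeBlock (m := p) S.R S.Z S.Hhat S.Hsub := by rw [S.Qj_unit]
      _ = (trailingTwo (m := p) S.Q11 S.Q12 S.Q21 S.Q22)ᴴ
            * (trailingTwo (m := p) S.Q11 S.Q12 S.Q21 S.Q22
              * threeBlock (m := p) S.R S.Z S.Hhat S.Hsub) := Matrix.mul_assoc _ _ _
      _ = _ := by rw [hsplit]
  have hQTHdec : ((trailingTwo (m := p) S.Q11 S.Q12 S.Q21 S.Q22)ᴴ).submatrix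
      (esum2 p L) (esum2 p L)
      = fromBlocks (fromBlocks 1 0 0 S.Q11ᴴ) (fromRows 0 S.Q21ᴴ)
        (fromCols 0 S.Q12ᴴ) S.Q22ᴴ := by
    rw [← Matrix.conjTranspose_submatrix, hQTdec, Matrix.fromBlocks_conjTranspose,
      Matrix.conjTranspose_fromCols_eq_fromRows_conjTranspose,
      Matrix.conjTranspose_fromRows_eq_fromCols_conjTranspose,
      Matrix.fromBlocks_conjTranspose]
    simp
  have hR2 : ((trailingTwo (m := p) S.Q11 S.Q12 S.Q21 S.Q22)ᴴ
      * threeBlock (m := p) S.R S.Z S.N 0).submatrix (esum2 p L) (esum p L)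
      = fromRows (fromBlocks S.R S.Z 0 (S.Q11ᴴ * S.N)) (fromCols 0 (S.Q12ᴴ * S.N)) := by
    rw [← Matrix.submatrix_mul_equiv ((trailingTwo (m := p) S.Q11 S.Q12 S.Q21 S.Q22)ᴴ)
      (threeBlock (m := p) S.R S.Z S.N 0) (⇑(esum2 p L)) (esum2 p L) (⇑(esum p L)),
      hQTHdec, hThr, Matrix.fromBlocks_mul_fromRows, Matrix.mul_zero, Matrix.mul_zero,
      add_zero, add_zero, Matrix.fromBlocks_multiply, Matrix.fromCols_mul_fromBlocks]
    simp
  have h2 : fromRows (fromBlocks S.R S.Z 0 S.Hhat) (fromCols 0 S.Hsub)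
      = fromRows (fromBlocks S.R S.Z 0 (S.Q11ᴴ * S.N)) (fromCols 0 (S.Q12ᴴ * S.N)) := by
    rw [← threeBlock_dec, hThrHS, hR2]
  have hHhat : S.Hhat = S.Q11ᴴ * S.N := by
    have h3 := ((Matrix.fromRows_ext_iff _ _ _ _).mp h2).1
    ext a b
    have h4 := congrFun (congrFun h3 (Sum.inr a)) (Sum.inr b)
    simpa using h4
  have hNC : S.Nhatᴴ * S.Chat = S.Nᴴ * S.C := by
    rw [S.Nhat_def]
    simp only [QRSetup.Chat, QRSetup.C]
    rw [Matrix.conjTranspose_mul, hHhat, Matrix.conjTranspose_mul,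
      Matrix.conjTranspose_conjTranspose,
      Matrix.mul_assoc (S.Nᴴ * S.Q11) S.Qhatbᴴ, ← Matrix.mul_assoc S.Qhatbᴴ S.Qhatb S.Ct,
      S.Qhatb_unit, Matrix.one_mul, Matrix.mul_assoc]
  have hNHdet : IsUnit S.Nᴴ.det := by
    rw [Matrix.det_conjTranspose]
    exact hNdet.star
  have hCiff : S.C = 0 ↔ Nhd * S.Chat = 0 := by
    constructor
    · intro hC
      have h1 : S.Nhatᴴ * S.Chat = 0 := by rw [hNC, hC, Matrix.mul_zero]
      calc Nhd * S.Chat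
          = Nhd * S.Nhat * Nhd * S.Chat := by rw [hm2]
        _ = Nhd * ((S.Nhat * Nhd) * S.Chat) := by
            rw [Matrix.mul_assoc Nhd S.Nhat Nhd, Matrix.mul_assoc]
        _ = Nhd * (Nhdᴴ * (S.Nhatᴴ * S.Chat)) := by
            rw [← hm3, Matrix.conjTranspose_mul, Matrix.mul_assoc]
        _ = 0 := by rw [h1, Matrix.mul_zero, Matrix.mul_zero]
    · intro hK
      have h1 : S.Nhatᴴ * S.Chat = 0 := by
        calc S.Nhatᴴ * S.Chat
            = (S.Nhat * Nhd * S.Nhat)ᴴ * S.Chat := by rw [hm1]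
          _ = (S.Nhatᴴ * (S.Nhat * Nhd)) * S.Chat := by
              rw [Matrix.conjTranspose_mul, hm3]
          _ = S.Nhatᴴ * (S.Nhat * (Nhd * S.Chat)) := by
              rw [Matrix.mul_assoc, Matrix.mul_assoc]
          _ = 0 := by rw [hK, Matrix.mul_zero, Matrix.mul_zero]
      have h2' : S.Nᴴ * S.C = 0 := by rw [← hNC]; exact h1
      have h3 := congrArg (fun X => (S.Nᴴ)⁻¹ * X) h2'
      simpa [← Matrix.mul_assoc, Matrix.nonsing_inv_mul _ hNHdet] using h3
  rw [hLHS, hRHS]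
  exact hCiff

end
end

section
/- Assume the block setup and the nested QR setup. Let A𝕂_j(A,F₀) := {A x : x ∈ 𝕂_j(A,F₀)} (a subspace of dimension jL). Let U ∈ ℂ^{n×L} have orthonormal columns spanning the column space of F₀, and let M ∈ ℂ^{n×jL} have orthonormal columns spanning A𝕂_j(A,F₀). Let σ₁,…,σ_L be the singular values of Uᴴ M (the cosines of the principal angles between the two subspaces). Then the multiset {√(1−σ_i²) : i = 1,…,L} of sines of these principal angles equals the multiset of singular values of the product Q_j^{(21)} Q_{j−1}^{(21)} ⋯ Q_1^{(21)}. -/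
open Matrix

noncomputable section

set_option maxHeartbeats 1000000

/-- Column space of a matrix: the span of its columns. -/
def colSpace {n : ℕ} {c : Type*} [Fintype c] (M : Matrix (Fin n) c ℂ) :
    Submodule ℂ (Fin n → ℂ) :=
  Submodule.span ℂ (Set.range fun j => fun r => M r j)

/-- The multiset of singular values of `M` (square roots of the eigenvalues of
`M Mᴴ`, one value for each row index). -/
noncomputable def svalsMultiset {a b : Type*} [Fintype a] [Fintype b] [DecidableEq a]
    (M : Matrix a b ℂ) : Multiset ℝ :=
  (Finset.univ.val : Multiset a).map
    fun i => Real.sqrt ((Matrix.isHermitian_mul_conjTranspose_self M).eigenvalues i)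

/-- The nested family of accumulated unitary factors:
`Q̄₀ = I` and `Q̄_i = Q_i · diag(Q̄_{i-1}, I_L)`, where `Q_i` is the identity outside
its trailing `2L × 2L` block `[[Q11 i, Q12 i], [Q21 i, Q22 i]]`. -/
def QbarFam {L : ℕ} (Q11f Q12f Q21f Q22f : ℕ → Matrix (Fin L) (Fin L) ℂ) :
    (i : ℕ) → Matrix (Fin (i+1) × Fin L) (Fin (i+1) × Fin L) ℂ
  | 0 => 1
  | i+1 => trailingTwo (m := i) (Q11f (i+1)) (Q12f (i+1)) (Q21f (i+1)) (Q22f (i+1)) *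
      extendOne (QbarFam Q11f Q12f Q21f Q22f i)

/-- The product `Qf i * Qf (i-1) * ⋯ * Qf 1`. -/
def prodFam {L : ℕ} (Qf : ℕ → Matrix (Fin L) (Fin L) ℂ) : ℕ → Matrix (Fin L) (Fin L) ℂ
  | 0 => 1
  | i+1 => Qf (i+1) * prodFam Qf i

/-- `H̄_i`, the leading `(i+1)L × iL` submatrix of `H̄_j`. -/
def BlockArnoldi.Hlead {n L p : ℕ} (D : BlockArnoldi n L p) (i : ℕ) (h : i ≤ p + 1) :
    Matrix (Fin (i+1) × Fin L) (Fin i × Fin L) ℂ :=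
  D.Hbar.submatrix (Prod.map (Fin.castLE (by omega)) id) (Prod.map (Fin.castLE (by omega)) id)

-- ===== auxiliary lemmas =====
section Aux

open Polynomial

variable {mi : Type*} [Fintype mi] [DecidableEq mi]

lemma charmatrix_eq' {R : Type*} [CommRing R] (M : Matrix mi mi R) :
    charmatrix M = Matrix.diagonal (fun _ => (X : R[X])) - M.map C := by
  ext i j
  rw [charmatrix_apply]
  simp [Matrix.sub_apply, Matrix.map_apply]

lemma charpoly_similar {R : Type*} [CommRing R] (A U V : Matrix mi mi R)
    (hUV : U * V = 1) (hVU : V * U = 1) : (U * A * V).charpoly = A.charpoly := by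
  have hmat : charmatrix (U * A * V) = U.map C * charmatrix A * V.map C := by
    rw [charmatrix_eq', charmatrix_eq']
    have hdiag : Matrix.diagonal (fun _ => (X : R[X])) = (X : R[X]) • (1 : Matrix mi mi R[X]) := by
      rw [Matrix.smul_one_eq_diagonal]
    rw [hdiag]
    have h1 : U.map (C : R →+* R[X]) * ((X : R[X]) • (1 : Matrix mi mi R[X]) - A.map C) * V.map C
        = (X : R[X]) • (U.map (C : R →+* R[X]) * V.map C) - U.map C * A.map C * V.map C := by
      rw [Matrix.mul_sub, Matrix.sub_mul]
      congr 1
      rw [Matrix.mul_smul, Matrix.mul_one, Matrix.smul_mul]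
    rw [h1, ← Matrix.map_mul, ← Matrix.map_mul, ← Matrix.map_mul, hUV,
      Matrix.map_one _ (map_zero C) (map_one C)]
  unfold Matrix.charpoly
  rw [hmat, Matrix.det_mul, Matrix.det_mul]
  have hdet : (U.map (C : R →+* R[X])).det * (V.map (C : R →+* R[X])).det = 1 := by
    rw [mul_comm, ← Matrix.det_mul, ← Matrix.map_mul, hVU,
      Matrix.map_one _ (map_zero C) (map_one C), Matrix.det_one]
  calc (U.map (C : R →+* R[X])).det * (charmatrix A).det * (V.map (C : R →+* R[X])).det
      = (charmatrix A).det * ((U.map (C : R →+* R[X])).det * (V.map (C : R →+* R[X])).det) := by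
        ring
    _ = (charmatrix A).det := by rw [hdet, mul_one]

lemma charpoly_diagonal {R : Type*} [CommRing R] (d : mi → R) :
    (Matrix.diagonal d).charpoly = ∏ i, (X - C (d i)) := by
  have h : charmatrix (Matrix.diagonal d) = Matrix.diagonal (fun i => (X : R[X]) - C (d i)) := by
    ext i j
    by_cases h : i = j
    · subst h; simp [charmatrix_apply]
    · simp [charmatrix_apply_ne _ _ _ h, Matrix.diagonal_apply_ne _ h]
  unfold Matrix.charpoly
  rw [h, Matrix.det_diagonal]

lemma charpoly_zero' {R : Type*} [CommRing R] :
    (0 : Matrix mi mi R).charpoly = X ^ (Fintype.card mi) := by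
  have h0 : (0 : Matrix mi mi R) = Matrix.diagonal (fun _ => (0 : R)) := by simp
  rw [h0, _root_.charpoly_diagonal]
  simp

lemma charpoly_mul_comm (A B : Matrix mi mi ℂ) : (A * B).charpoly = (B * A).charpoly := by
  have key : (fromBlocks (A * B) 0 B (0 : Matrix mi mi ℂ)) =
      (fromBlocks 1 A 0 1) * (fromBlocks 0 0 B (B * A)) * (fromBlocks 1 (-A) 0 1) := by
    rw [Matrix.fromBlocks_multiply, Matrix.fromBlocks_multiply]
    congr 1 <;> simp [Matrix.mul_assoc]
  have hUV : (fromBlocks 1 A 0 1 : Matrix (mi ⊕ mi) (mi ⊕ mi) ℂ) * fromBlocks 1 (-A) 0 1 = 1 := by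
    rw [Matrix.fromBlocks_multiply, ← Matrix.fromBlocks_one]
    congr 1 <;> simp
  have hVU : (fromBlocks 1 (-A) 0 1 : Matrix (mi ⊕ mi) (mi ⊕ mi) ℂ) * fromBlocks 1 A 0 1 = 1 := by
    rw [Matrix.fromBlocks_multiply, ← Matrix.fromBlocks_one]
    congr 1 <;> simp
  have h1 : (fromBlocks (A * B) 0 B (0 : Matrix mi mi ℂ)).charpoly
      = (fromBlocks (0 : Matrix mi mi ℂ) 0 B (B * A)).charpoly := by
    rw [key]; exact charpoly_similar _ _ _ hUV hVU
  rw [Matrix.charpoly_fromBlocks_zero₁₂, Matrix.charpoly_fromBlocks_zero₁₂, charpoly_zero'] at h1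
  have hX : (X : ℂ[X]) ^ (Fintype.card mi) ≠ 0 := pow_ne_zero _ X_ne_zero
  have h2 := h1
  rw [mul_comm] at h2
  exact mul_left_cancel₀ hX (by rw [h2])

lemma herm_charpoly {A : Matrix mi mi ℂ} (hA : A.IsHermitian) :
    A.charpoly = ∏ i, (X - C ((hA.eigenvalues i : ℝ) : ℂ)) := by
  have hsp := hA.spectral_theorem
  rw [Unitary.conjStarAlgAut_apply] at hsp
  have hu := (Matrix.mem_unitaryGroup_iff).mp (Matrix.IsHermitian.eigenvectorUnitary hA).2
  have hu' := (Matrix.mem_unitaryGroup_iff').mp (Matrix.IsHermitian.eigenvectorUnitary hA).2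
  calc A.charpoly = ((Matrix.IsHermitian.eigenvectorUnitary hA : Matrix mi mi ℂ) *
          Matrix.diagonal (RCLike.ofReal ∘ hA.eigenvalues) *
          (star (Matrix.IsHermitian.eigenvectorUnitary hA : Matrix mi mi ℂ))).charpoly := by
        rw [← hsp]
    _ = (Matrix.diagonal (RCLike.ofReal ∘ hA.eigenvalues)).charpoly :=
        charpoly_similar _ _ _ hu hu'
    _ = ∏ i, (X - C ((hA.eigenvalues i : ℝ) : ℂ)) := by
        rw [_root_.charpoly_diagonal]; rfl

lemma herm_one_sub_charpoly {A : Matrix mi mi ℂ} (hA : A.IsHermitian) :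
    (1 - A).charpoly = ∏ i, (X - C (((1 - hA.eigenvalues i : ℝ)) : ℂ)) := by
  have hsp := hA.spectral_theorem
  rw [Unitary.conjStarAlgAut_apply] at hsp
  have hu := (Matrix.mem_unitaryGroup_iff).mp (Matrix.IsHermitian.eigenvectorUnitary hA).2
  have hu' := (Matrix.mem_unitaryGroup_iff').mp (Matrix.IsHermitian.eigenvectorUnitary hA).2
  set Uu := (Matrix.IsHermitian.eigenvectorUnitary hA : Matrix mi mi ℂ) with hUu
  have hone : (1 : Matrix mi mi ℂ) = Uu * 1 * star Uu := by
    rw [Matrix.mul_one, hu]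
  have hsub : (1 : Matrix mi mi ℂ) - A
      = Uu * (1 - Matrix.diagonal (RCLike.ofReal ∘ hA.eigenvalues)) * star Uu := by
    rw [Matrix.mul_sub, Matrix.sub_mul]
    nth_rewrite 1 [hone]
    rw [← hsp]
  have hd : (1 : Matrix mi mi ℂ) - Matrix.diagonal (RCLike.ofReal ∘ hA.eigenvalues)
      = Matrix.diagonal (fun i => 1 - ((hA.eigenvalues i : ℝ) : ℂ)) := by
    rw [← Matrix.diagonal_one, Matrix.diagonal_sub]
    rfl
  rw [hsub, charpoly_similar _ _ _ hu hu', hd, _root_.charpoly_diagonal]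
  apply Finset.prod_congr rfl
  intro i _
  congr 1
  push_cast
  ring

lemma multiset_of_prod_eq {f g : mi → ℝ}
    (h : ∏ i, ((X : ℂ[X]) - C ((f i : ℝ) : ℂ)) = ∏ i, ((X : ℂ[X]) - C ((g i : ℝ) : ℂ))) :
    (Finset.univ.val : Multiset mi).map f = (Finset.univ.val : Multiset mi).map g := by
  have hf : (∏ i, ((X : ℂ[X]) - C ((f i : ℝ) : ℂ))).roots
      = (Finset.univ.val : Multiset mi).map (fun i => ((f i : ℝ) : ℂ)) := by
    rw [show (∏ i, ((X : ℂ[X]) - C ((f i : ℝ) : ℂ)))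
        = (((Finset.univ.val : Multiset mi).map (fun i => ((f i : ℝ) : ℂ))).map
            (fun a => X - C a)).prod by
      rw [Multiset.map_map]; rfl]
    exact roots_multiset_prod_X_sub_C _
  have hg : (∏ i, ((X : ℂ[X]) - C ((g i : ℝ) : ℂ))).roots
      = (Finset.univ.val : Multiset mi).map (fun i => ((g i : ℝ) : ℂ)) := by
    rw [show (∏ i, ((X : ℂ[X]) - C ((g i : ℝ) : ℂ)))
        = (((Finset.univ.val : Multiset mi).map (fun i => ((g i : ℝ) : ℂ))).map
            (fun a => X - C a)).prod by
      rw [Multiset.map_map]; rfl]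
    exact roots_multiset_prod_X_sub_C _
  have hc : (Finset.univ.val : Multiset mi).map (fun i => ((f i : ℝ) : ℂ))
      = (Finset.univ.val : Multiset mi).map (fun i => ((g i : ℝ) : ℂ)) := by
    rw [← hf, ← hg, h]
  apply Multiset.map_injective (Complex.ofReal_injective)
  rw [Multiset.map_map, Multiset.map_map]
  exact hc

end Aux

section Aux2

variable {n : ℕ} {bt ct : Type*} [Fintype bt] [Fintype ct]

lemma colSpace_mul_le (A : Matrix (Fin n) bt ℂ) (B : Matrix bt ct ℂ) :
    colSpace (A * B) ≤ colSpace A := by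
  rw [colSpace, Submodule.span_le]
  rintro v ⟨j, rfl⟩
  show (fun r => (A * B) r j) ∈ colSpace A
  have h : (fun r => (A * B) r j) = ∑ k, B k j • (fun r => A r k) := by
    funext r
    simp [Matrix.mul_apply, Finset.sum_apply, mul_comm]
  rw [h]
  exact Submodule.sum_mem _ fun k _ =>
    Submodule.smul_mem _ _ (Submodule.subset_span ⟨k, rfl⟩)

lemma colSpace_mul_unit [DecidableEq ct] (A : Matrix (Fin n) ct ℂ) (K : Matrix ct ct ℂ)
    (hK : IsUnit K) : colSpace (A * K) = colSpace A := by
  refine le_antisymm (colSpace_mul_le A K) ?_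
  have h : A = (A * K) * K⁻¹ := by
    rw [Matrix.mul_assoc]
    have h2 : K * K⁻¹ = 1 :=
      Matrix.mul_nonsing_inv K ((Matrix.isUnit_iff_isUnit_det K).mp hK)
    rw [h2, Matrix.mul_one]
  calc colSpace A = colSpace ((A * K) * K⁻¹) := by rw [← h]
    _ ≤ colSpace (A * K) := colSpace_mul_le _ _

lemma colSpace_mulVecLin (A : Matrix (Fin n) (Fin n) ℂ) (B : Matrix (Fin n) ct ℂ) :
    Submodule.map A.mulVecLin (colSpace B) = colSpace (A * B) := by
  rw [colSpace, colSpace, Submodule.map_span, ← Set.range_comp]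
  have h : (A.mulVecLin ∘ fun j r => B r j) = fun j r => (A * B) r j := by
    funext j r
    simp [Matrix.mulVecLin_apply, Matrix.mulVec, Matrix.mul_apply, dotProduct]
  rw [h]

lemma ortho_factor [DecidableEq ct] (P Q : Matrix (Fin n) ct ℂ)
    (hP : Pᴴ * P = 1) (hQ : Qᴴ * Q = 1) (h : colSpace P ≤ colSpace Q) :
    P = Q * (Qᴴ * P) ∧ (Qᴴ * P)ᴴ * (Qᴴ * P) = 1 := by
  have hcols : ∀ j, ∃ f : ct → ℂ, ∑ i, f i • (fun r => Q r i) = (fun r => P r j) := by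
    intro j
    have hmem : (fun r => P r j) ∈ colSpace Q :=
      h (Submodule.subset_span ⟨j, rfl⟩)
    exact (Submodule.mem_span_range_iff_exists_fun ℂ).mp hmem
  have hPQK : ∃ K : Matrix ct ct ℂ, P = Q * K := by
    refine ⟨Matrix.of fun i j => (hcols j).choose i, ?_⟩
    ext r j
    have hs := congrFun (hcols j).choose_spec r
    simp only [Finset.sum_apply, Pi.smul_apply, smul_eq_mul] at hs
    rw [Matrix.mul_apply]
    rw [← hs]
    exact Finset.sum_congr rfl fun i _ => by simp [Matrix.of_apply, mul_comm]
  obtain ⟨K, hK⟩ := hPQK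
  have hKey : Qᴴ * P = K := by
    rw [hK, ← Matrix.mul_assoc, hQ, Matrix.one_mul]
  have hfact : P = Q * (Qᴴ * P) := by rw [hKey, ← hK]
  refine ⟨hfact, ?_⟩
  have h3 : (Qᴴ * P)ᴴ * (Qᴴ * P) = Pᴴ * (Q * (Qᴴ * P)) := by
    rw [Matrix.conjTranspose_mul, Matrix.conjTranspose_conjTranspose, Matrix.mul_assoc]
  rw [h3, ← hfact, hP]

lemma ortho_proj_eq [DecidableEq ct] (P Q : Matrix (Fin n) ct ℂ)
    (hP : Pᴴ * P = 1) (hQ : Qᴴ * Q = 1) (h : colSpace P = colSpace Q) :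
    P * Pᴴ = Q * Qᴴ := by
  obtain ⟨hfact, hunit⟩ := ortho_factor P Q hP hQ h.le
  have hTT : (Qᴴ * P) * (Qᴴ * P)ᴴ = 1 := (mul_eq_one_comm).mpr hunit
  have step : (Q * (Qᴴ * P)) * (Q * (Qᴴ * P))ᴴ = Q * ((Qᴴ * P) * (Qᴴ * P)ᴴ) * Qᴴ := by
    rw [Matrix.conjTranspose_mul]
    simp only [Matrix.mul_assoc]
  calc P * Pᴴ = (Q * (Qᴴ * P)) * (Q * (Qᴴ * P))ᴴ := by rw [← hfact]
    _ = Q * ((Qᴴ * P) * (Qᴴ * P)ᴴ) * Qᴴ := step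
    _ = Q * Qᴴ := by rw [hTT, Matrix.mul_one]

lemma submatrix_conjT_mul {a1 bt2 ct2 dt : Type*} [Fintype a1] [Fintype bt2]
    (A : Matrix (Fin n) a1 ℂ) (B : Matrix (Fin n) bt2 ℂ) (e : ct2 → a1) (f : dt → bt2) :
    (A.submatrix id e)ᴴ * (B.submatrix id f) = (Aᴴ * B).submatrix e f := by
  ext i j
  simp [Matrix.mul_apply, Matrix.conjTranspose_apply]

lemma submatrix_one_inj {a1 ct2 : Type*} [Fintype a1] [DecidableEq a1] [DecidableEq ct2]
    (e : ct2 → a1) (he : Function.Injective e) :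
    (1 : Matrix a1 a1 ℂ).submatrix e e = 1 := by
  ext i j
  simp [Matrix.one_apply, he.eq_iff]

end Aux2

-- ===== block structure lemmas =====

def blockEquiv (m L : ℕ) : (Fin m × Fin L) ⊕ Fin L ≃ Fin (m+1) × Fin L where
  toFun x := Sum.elim (fun p => (p.1.castSucc, p.2)) (fun l => (Fin.last m, l)) x
  invFun r := if h : (r.1 : ℕ) < m then Sum.inl (⟨r.1, h⟩, r.2) else Sum.inr r.2
  left_inv x := by
    rcases x with ⟨⟨i, l⟩⟩ | l
    · simp [Fin.castSucc]
    · simp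
  right_inv r := by
    rcases r with ⟨r1, r2⟩
    by_cases h : (r1 : ℕ) < m
    · simp only [h, dif_pos]
      simp [Fin.ext_iff]
    · simp only [h, dif_neg]
      have h2 : r1 = Fin.last m := by
        apply Fin.ext
        have := r1.isLt
        simp only [Fin.val_last]
        omega
      simp [h2]

lemma extendOne_eq {m L : ℕ} (Q : Matrix (Fin m × Fin L) (Fin m × Fin L) ℂ) :
    extendOne Q = Matrix.reindex (blockEquiv m L) (blockEquiv m L)
      (Matrix.fromBlocks Q 0 0 1) := by
  ext r c
  rcases r with ⟨r1, r2⟩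
  rcases c with ⟨c1, c2⟩
  simp only [Matrix.reindex_apply, Matrix.submatrix_apply, blockEquiv, Equiv.coe_fn_symm_mk]
  by_cases hr : (r1 : ℕ) < m <;> by_cases hc : (c1 : ℕ) < m <;>
    simp [extendOne, hr, hc, Matrix.one_apply]

lemma extendOne_mul {m L : ℕ} (A B : Matrix (Fin m × Fin L) (Fin m × Fin L) ℂ) :
    extendOne A * extendOne B = extendOne (A * B) := by
  rw [extendOne_eq, extendOne_eq, extendOne_eq]
  simp only [Matrix.reindex_apply]
  rw [Matrix.submatrix_mul_equiv, Matrix.fromBlocks_multiply]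
  simp

lemma extendOne_conjTranspose {m L : ℕ} (A : Matrix (Fin m × Fin L) (Fin m × Fin L) ℂ) :
    (extendOne A)ᴴ = extendOne Aᴴ := by
  rw [extendOne_eq, extendOne_eq]
  simp only [Matrix.reindex_apply]
  rw [Matrix.conjTranspose_submatrix, Matrix.fromBlocks_conjTranspose]
  simp

lemma extendOne_one {m L : ℕ} : extendOne (1 : Matrix (Fin m × Fin L) (Fin m × Fin L) ℂ) = 1 := by
  rw [extendOne_eq, Matrix.fromBlocks_one]
  simp only [Matrix.reindex_apply]
  exact Matrix.submatrix_one_equiv _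

lemma QbarFam_unit {L : ℕ} (Q11f Q12f Q21f Q22f : ℕ → Matrix (Fin L) (Fin L) ℂ)
    (i : ℕ)
    (h : ∀ j : ℕ, j < i →
      (trailingTwo (m := j) (Q11f (j+1)) (Q12f (j+1)) (Q21f (j+1)) (Q22f (j+1)))ᴴ *
        trailingTwo (m := j) (Q11f (j+1)) (Q12f (j+1)) (Q21f (j+1)) (Q22f (j+1)) = 1) :
    (QbarFam Q11f Q12f Q21f Q22f i)ᴴ * QbarFam Q11f Q12f Q21f Q22f i = 1 := by
  induction i with
  | zero => simp [QbarFam]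
  | succ i ih =>
    have ih' := ih (fun j hj => h j (Nat.lt_succ_of_lt hj))
    show (trailingTwo (m := i) (Q11f (i+1)) (Q12f (i+1)) (Q21f (i+1)) (Q22f (i+1)) *
        extendOne (QbarFam Q11f Q12f Q21f Q22f i))ᴴ *
      (trailingTwo (m := i) (Q11f (i+1)) (Q12f (i+1)) (Q21f (i+1)) (Q22f (i+1)) *
        extendOne (QbarFam Q11f Q12f Q21f Q22f i)) = 1
    rw [Matrix.conjTranspose_mul]
    have hT := h i (Nat.lt_succ_self i)
    calc (extendOne (QbarFam Q11f Q12f Q21f Q22f i))ᴴ *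
          (trailingTwo (m := i) (Q11f (i+1)) (Q12f (i+1)) (Q21f (i+1)) (Q22f (i+1)))ᴴ *
          (trailingTwo (m := i) (Q11f (i+1)) (Q12f (i+1)) (Q21f (i+1)) (Q22f (i+1)) *
            extendOne (QbarFam Q11f Q12f Q21f Q22f i))
        = (extendOne (QbarFam Q11f Q12f Q21f Q22f i))ᴴ *
            extendOne (QbarFam Q11f Q12f Q21f Q22f i) := by
          rw [Matrix.mul_assoc, ← Matrix.mul_assoc
            (trailingTwo (m := i) (Q11f (i+1)) (Q12f (i+1)) (Q21f (i+1)) (Q22f (i+1)))ᴴ, hT,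
            Matrix.one_mul]
      _ = 1 := by
          rw [extendOne_conjTranspose, extendOne_mul, ih', extendOne_one]

lemma QbarFam_corner {L : ℕ} (Q11f Q12f Q21f Q22f : ℕ → Matrix (Fin L) (Fin L) ℂ)
    (i : ℕ) (a b : Fin L) :
    QbarFam Q11f Q12f Q21f Q22f i (Fin.last i, a) ((0 : Fin (i+1)), b) =
      prodFam Q21f i a b := by
  induction i generalizing a b with
  | zero =>
    show (1 : Matrix (Fin 1 × Fin L) (Fin 1 × Fin L) ℂ) _ _ = (1 : Matrix (Fin L) (Fin L) ℂ) a b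
    simp [Matrix.one_apply, Prod.ext_iff, Fin.ext_iff]
  | succ i ih =>
    show (trailingTwo (m := i) (Q11f (i+1)) (Q12f (i+1)) (Q21f (i+1)) (Q22f (i+1)) *
        extendOne (QbarFam Q11f Q12f Q21f Q22f i)) (Fin.last (i+1), a) ((0 : Fin (i+2)), b) =
      (Q21f (i+1) * prodFam Q21f i) a b
    rw [Matrix.mul_apply, Matrix.mul_apply]
    rw [Fintype.sum_prod_type]
    rw [Fin.sum_univ_castSucc]
    have hlast : ∀ s : Fin L,
        trailingTwo (m := i) (Q11f (i+1)) (Q12f (i+1)) (Q21f (i+1)) (Q22f (i+1))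
            (Fin.last (i+1), a) (Fin.last (i+1), s) *
          extendOne (QbarFam Q11f Q12f Q21f Q22f i) (Fin.last (i+1), s) ((0 : Fin (i+2)), b)
        = 0 := by
      intro s
      have h0 : extendOne (QbarFam Q11f Q12f Q21f Q22f i) (Fin.last (i+1), s)
          ((0 : Fin (i+2)), b) = 0 := by
        simp [extendOne, Fin.val_last]
      rw [h0, mul_zero]
    rw [Finset.sum_congr rfl (fun s _ => hlast s), Finset.sum_const, smul_zero, add_zero]
    rw [Fin.sum_univ_castSucc]
    have hsmall : ∀ (k : Fin i) (s : Fin L),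
        trailingTwo (m := i) (Q11f (i+1)) (Q12f (i+1)) (Q21f (i+1)) (Q22f (i+1))
            (Fin.last (i+1), a) (k.castSucc.castSucc, s) *
          extendOne (QbarFam Q11f Q12f Q21f Q22f i) (k.castSucc.castSucc, s)
            ((0 : Fin (i+2)), b) = 0 := by
      intro k s
      have h1 : trailingTwo (m := i) (Q11f (i+1)) (Q12f (i+1)) (Q21f (i+1)) (Q22f (i+1))
          (Fin.last (i+1), a) (k.castSucc.castSucc, s) = 0 := by
        have hk : ((k.castSucc.castSucc : Fin (i+2)) : ℕ) < i := by simp [k.isLt]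
        have hne : (Fin.last (i+1), a) ≠ ((k.castSucc.castSucc : Fin (i+2)), s) := by
          intro hEq
          have := congrArg (fun x => (x.1 : ℕ)) hEq
          simp [Fin.val_last] at this
          omega
        simp [trailingTwo, hk, hne]
      rw [h1, zero_mul]
    have hz : ∀ k : Fin i, (∑ s : Fin L,
        trailingTwo (m := i) (Q11f (i+1)) (Q12f (i+1)) (Q21f (i+1)) (Q22f (i+1))
            (Fin.last (i+1), a) (k.castSucc.castSucc, s) *
          extendOne (QbarFam Q11f Q12f Q21f Q22f i) (k.castSucc.castSucc, s)
            ((0 : Fin (i+2)), b)) = 0 := by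
      intro k
      exact Finset.sum_eq_zero fun s _ => hsmall k s
    rw [Finset.sum_congr rfl (fun k _ => hz k), Finset.sum_const, smul_zero, zero_add]
    apply Finset.sum_congr rfl
    intro s _
    have h2 : trailingTwo (m := i) (Q11f (i+1)) (Q12f (i+1)) (Q21f (i+1)) (Q22f (i+1))
        (Fin.last (i+1), a) ((Fin.last i).castSucc, s) = Q21f (i+1) a s := by
      simp [trailingTwo, Fin.val_last]
    have h3 : extendOne (QbarFam Q11f Q12f Q21f Q22f i) ((Fin.last i).castSucc, s)
        ((0 : Fin (i+2)), b) = QbarFam Q11f Q12f Q21f Q22f i (Fin.last i, s)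
          ((0 : Fin (i+1)), b) := by
      have hlt : (((Fin.last i).castSucc : Fin (i+2)) : ℕ) < i + 1 := by simp
      simp only [extendOne, Matrix.of_apply, hlt, dif_pos]
      have h0 : ((0 : Fin (i+2)) : ℕ) < i + 1 := by simp
      rw [dif_pos h0]
      congr 1 <;> apply Prod.ext <;> simp [Fin.ext_iff]
    rw [h2, h3, ih s b]


/-- The sines of the principal angles between the column space of
`F₀` and `A 𝕂_j(A, F₀)` are the singular values of the product
`Q_j^(21) Q_{j-1}^(21) ⋯ Q_1^(21)`. -/
theorem stmt18 {n L p : ℕ} (D : BlockArnoldi n L p)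
    (Q11f Q12f Q21f Q22f : ℕ → Matrix (Fin L) (Fin L) ℂ)
    (hQ_unit : ∀ i : Fin (p+1),
      (trailingTwo (m := (i : ℕ)) (Q11f ((i : ℕ)+1)) (Q12f ((i : ℕ)+1))
          (Q21f ((i : ℕ)+1)) (Q22f ((i : ℕ)+1)))ᴴ *
        trailingTwo (m := (i : ℕ)) (Q11f ((i : ℕ)+1)) (Q12f ((i : ℕ)+1))
          (Q21f ((i : ℕ)+1)) (Q22f ((i : ℕ)+1)) = 1)
    (hQR_zero : ∀ i : Fin (p+1), ∀ (a : Fin L) c,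
      (QbarFam Q11f Q12f Q21f Q22f ((i : ℕ)+1) *
        D.Hlead ((i : ℕ)+1) (Nat.succ_le_of_lt i.isLt)) (Fin.last ((i : ℕ)+1), a) c = 0)
    (hQR_ut : ∀ i : Fin (p+1),
      utBig ((QbarFam Q11f Q12f Q21f Q22f ((i : ℕ)+1) *
        D.Hlead ((i : ℕ)+1) (Nat.succ_le_of_lt i.isLt)).submatrix
          (Prod.map Fin.castSucc id) id))
    (hQR_inv : ∀ i : Fin (p+1),
      IsUnit ((QbarFam Q11f Q12f Q21f Q22f ((i : ℕ)+1) *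
        D.Hlead ((i : ℕ)+1) (Nat.succ_le_of_lt i.isLt)).submatrix
          (Prod.map Fin.castSucc id) id))
    (U : Matrix (Fin n) (Fin L) ℂ) (hU_orth : Uᴴ * U = 1)
    (hU_span : colSpace U = colSpace (D.B - D.A * D.X0))
    (M : Matrix (Fin n) (Fin (p+1) × Fin L) ℂ) (hM_orth : Mᴴ * M = 1)
    (hM_span : colSpace M =
      Submodule.map (D.A).mulVecLin (blockKrylov D.A (D.B - D.A * D.X0) (p+1))) :
    (Finset.univ.val : Multiset (Fin L)).map
        (fun i => Real.sqrt (1 -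
          Real.sqrt ((Matrix.isHermitian_mul_conjTranspose_self (Uᴴ * M)).eigenvalues i) ^ 2))
      = svalsMultiset (prodFam Q21f (p+1)) := by
  classical
  have hQbu : (QbarFam Q11f Q12f Q21f Q22f (p+1))ᴴ * QbarFam Q11f Q12f Q21f Q22f (p+1) = 1 :=
    QbarFam_unit Q11f Q12f Q21f Q22f (p+1) (fun j hj => hQ_unit ⟨j, hj⟩)
  have hQbu' : QbarFam Q11f Q12f Q21f Q22f (p+1) * (QbarFam Q11f Q12f Q21f Q22f (p+1))ᴴ = 1 :=
    mul_eq_one_comm.mp hQbu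
  set Qb : Matrix (Fin (p+2) × Fin L) (Fin (p+2) × Fin L) ℂ :=
    QbarFam Q11f Q12f Q21f Q22f (p+1) with hQb
  set V1 : Matrix (Fin n) (Fin L) ℂ :=
    D.W.submatrix id (fun c : Fin L => ((0 : Fin (p+2)), c)) with hV1
  set Wf : Matrix (Fin n) (Fin (p+1) × Fin L) ℂ :=
    D.W.submatrix id (Prod.map Fin.castSucc (id : Fin L → Fin L)) with hWf
  set Nm : Matrix (Fin n) (Fin (p+1) × Fin L) ℂ :=
    (D.W * Qbᴴ).submatrix id (Prod.map Fin.castSucc (id : Fin L → Fin L)) with hNm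
  set Xm : Matrix (Fin (p+1) × Fin L) (Fin L) ℂ :=
    Qb.submatrix (Prod.map Fin.castSucc (id : Fin L → Fin L))
      (fun c : Fin L => ((0 : Fin (p+2)), c)) with hXm
  set Pm : Matrix (Fin L) (Fin L) ℂ := prodFam Q21f (p+1) with hPm
  -- injectivity of the index embeddings
  have he1inj : Function.Injective (fun c : Fin L => ((0 : Fin (p+2)), c)) := by
    intro a b h
    simpa using congrArg Prod.snd h
  have he2inj : Function.Injective (Prod.map (Fin.castSucc : Fin (p+1) → Fin (p+2)) (id : Fin L → Fin L)) := by
    rintro ⟨x1, x2⟩ ⟨y1, y2⟩ h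
    simp only [Prod.map, Prod.mk.injEq, id] at h
    exact Prod.ext_iff.mpr ⟨Fin.castSucc_injective _ h.1, h.2⟩
  -- orthonormality of V1 and Nm
  have hV1o : V1ᴴ * V1 = 1 := by
    rw [hV1, submatrix_conjT_mul, D.orth, submatrix_one_inj _ he1inj]
  have hNWQ : (D.W * Qbᴴ)ᴴ * (D.W * Qbᴴ) = 1 := by
    rw [Matrix.conjTranspose_mul, Matrix.conjTranspose_conjTranspose]
    calc Qb * D.Wᴴ * (D.W * Qbᴴ) = Qb * ((D.Wᴴ * D.W) * Qbᴴ) := by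
          simp only [Matrix.mul_assoc]
      _ = 1 := by rw [D.orth, Matrix.one_mul, hQbu']
  have hNo : Nmᴴ * Nm = 1 := by
    rw [hNm, submatrix_conjT_mul, hNWQ, submatrix_one_inj _ he2inj]
  -- the Krylov space is the column space of Wf
  have hKry : blockKrylov D.A (D.B - D.A * D.X0) (p+1) = colSpace Wf := by
    rw [D.span (p+1) (by omega)]
    unfold colSpace
    congr 1
    ext v
    constructor
    · rintro ⟨c, hc, rfl⟩
      exact ⟨(⟨(c.1 : ℕ), hc⟩, c.2), rfl⟩
    · rintro ⟨⟨i, l⟩, rfl⟩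
      exact ⟨(i.castSucc, l), by simpa using i.isLt, rfl⟩
  have hMcol : colSpace M = colSpace (D.W * D.Hbar) := by
    rw [hM_span, hKry, colSpace_mulVecLin]
    congr 1
    exact D.arnoldi
  -- the QR data
  have hz : ∀ (a : Fin L) (c : Fin (p+1) × Fin L),
      (Qb * D.Hbar) (Fin.last (p+1), a) c = 0 := by
    intro a c
    exact hQR_zero ⟨p, Nat.lt_succ_self p⟩ a c
  set Rb : Matrix (Fin (p+1) × Fin L) (Fin (p+1) × Fin L) ℂ :=
    (Qb * D.Hbar).submatrix (Prod.map Fin.castSucc (id : Fin L → Fin L)) id with hRb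
  have hRinv : IsUnit Rb := hQR_inv ⟨p, Nat.lt_succ_self p⟩
  have hNR : Nm * Rb = D.W * D.Hbar := by
    have hWH : D.W * D.Hbar = (D.W * Qbᴴ) * (Qb * D.Hbar) := by
      calc D.W * D.Hbar = D.W * ((Qbᴴ * Qb) * D.Hbar) := by rw [hQbu, Matrix.one_mul]
        _ = (D.W * Qbᴴ) * (Qb * D.Hbar) := by simp only [Matrix.mul_assoc]
    rw [hWH]
    ext r c
    rw [Matrix.mul_apply, Matrix.mul_apply]
    have hlz : ∑ s : Fin L, (D.W * Qbᴴ) r (Fin.last (p+1), s) *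
        (Qb * D.Hbar) (Fin.last (p+1), s) c = 0 :=
      Finset.sum_eq_zero fun s _ => by rw [hz s c, mul_zero]
    conv_rhs => rw [Fintype.sum_prod_type, Fin.sum_univ_castSucc]
    rw [hlz, add_zero]
    conv_lhs => rw [Fintype.sum_prod_type]
    rfl
  have hNM : colSpace Nm = colSpace M := by
    calc colSpace Nm = colSpace (Nm * Rb) := (colSpace_mul_unit Nm Rb hRinv).symm
      _ = colSpace (D.W * D.Hbar) := by rw [hNR]
      _ = colSpace M := hMcol.symm
  have hproj : M * Mᴴ = Nm * Nmᴴ := ortho_proj_eq M Nm hM_orth hNo hNM.symm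
  -- the U side
  have hUV1 : colSpace U = colSpace V1 := by
    rw [hU_span]
    have hF := D.F0_eq
    rw [← hV1] at hF
    rw [hF]
    exact colSpace_mul_unit V1 D.S0 D.S0_inv
  obtain ⟨hUf, hTu⟩ := ortho_factor U V1 hU_orth hV1o hUV1.le
  have hTu' : (V1ᴴ * U) * (V1ᴴ * U)ᴴ = 1 := mul_eq_one_comm.mpr hTu
  -- relating V1, Nm and Xm
  have hXN : V1ᴴ * Nm = Xmᴴ := by
    rw [hV1, hNm, submatrix_conjT_mul, ← Matrix.mul_assoc, D.orth, Matrix.one_mul,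
      hXm, Matrix.conjTranspose_submatrix]
  have hNX : Nmᴴ * V1 = Xm := by
    have h := congrArg Matrix.conjTranspose hXN
    simp only [Matrix.conjTranspose_mul, Matrix.conjTranspose_conjTranspose] at h
    exact h
  have hHU : (Uᴴ * M) * (Uᴴ * M)ᴴ = (V1ᴴ * U)ᴴ * (Xmᴴ * Xm) * (V1ᴴ * U) := by
    have s1 : (Uᴴ * M) * (Uᴴ * M)ᴴ = Uᴴ * (M * Mᴴ) * U := by
      rw [Matrix.conjTranspose_mul, Matrix.conjTranspose_conjTranspose]
      simp only [Matrix.mul_assoc]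
    rw [s1, hproj]
    conv_lhs => rw [hUf]
    rw [Matrix.conjTranspose_mul]
    rw [← hXN, ← hNX]
    simp only [Matrix.mul_assoc]
  -- the sine relation
  have hPP : Pmᴴ * Pm = 1 - Xmᴴ * Xm := by
    ext a b
    have expand : (Qbᴴ * Qb) ((0 : Fin (p+2)), a) ((0 : Fin (p+2)), b)
        = (Xmᴴ * Xm) a b + (Pmᴴ * Pm) a b := by
      conv_lhs => rw [Matrix.mul_apply, Fintype.sum_prod_type, Fin.sum_univ_castSucc]
      congr 1
      · conv_rhs => rw [Matrix.mul_apply, Fintype.sum_prod_type]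
        rfl
      · conv_rhs => rw [Matrix.mul_apply]
        refine Finset.sum_congr rfl (fun s _ => ?_)
        have hca : Qb (Fin.last (p+1), s) ((0 : Fin (p+2)), a) = Pm s a :=
          QbarFam_corner Q11f Q12f Q21f Q22f (p+1) s a
        have hcb : Qb (Fin.last (p+1), s) ((0 : Fin (p+2)), b) = Pm s b :=
          QbarFam_corner Q11f Q12f Q21f Q22f (p+1) s b
        show star (Qb (Fin.last (p+1), s) ((0 : Fin (p+2)), a)) *
            Qb (Fin.last (p+1), s) ((0 : Fin (p+2)), b) = star (Pm s a) * Pm s b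
        rw [hca, hcb]
    rw [hQbu] at expand
    have hone : (1 : Matrix (Fin (p+2) × Fin L) (Fin (p+2) × Fin L) ℂ)
        ((0 : Fin (p+2)), a) ((0 : Fin (p+2)), b) = (1 : Matrix (Fin L) (Fin L) ℂ) a b := by
      simp [Matrix.one_apply, Prod.ext_iff]
    rw [hone] at expand
    rw [Matrix.sub_apply]
    linear_combination -expand
  -- eigenvalue bookkeeping
  have hGh : (Xmᴴ * Xm).IsHermitian := by
    have h := Matrix.isHermitian_mul_conjTranspose_self Xmᴴ
    simpa using h
  have hPPh : (Pm * Pmᴴ).IsHermitian := Matrix.isHermitian_mul_conjTranspose_self Pm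
  have hchar1 : ((Uᴴ * M) * (Uᴴ * M)ᴴ).charpoly = (Xmᴴ * Xm).charpoly := by
    rw [hHU]
    exact charpoly_similar _ _ _ hTu hTu'
  have hm1 : (Finset.univ.val : Multiset (Fin L)).map
        (Matrix.isHermitian_mul_conjTranspose_self (Uᴴ * M)).eigenvalues
      = (Finset.univ.val : Multiset (Fin L)).map hGh.eigenvalues := by
    apply multiset_of_prod_eq
    rw [← herm_charpoly (Matrix.isHermitian_mul_conjTranspose_self (Uᴴ * M)),
      ← herm_charpoly hGh, hchar1]
  have hchar2 : (Pm * Pmᴴ).charpoly = (1 - Xmᴴ * Xm).charpoly := by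
    rw [_root_.charpoly_mul_comm, hPP]
  have hm2 : (Finset.univ.val : Multiset (Fin L)).map hPPh.eigenvalues
      = (Finset.univ.val : Multiset (Fin L)).map (fun i => 1 - hGh.eigenvalues i) := by
    apply multiset_of_prod_eq
    rw [← herm_charpoly hPPh, hchar2, herm_one_sub_charpoly hGh]
  have hnn : ∀ i : Fin L,
      0 ≤ (Matrix.isHermitian_mul_conjTranspose_self (Uᴴ * M)).eigenvalues i := by
    intro i
    open ComplexOrder in
    exact (Matrix.posSemidef_self_mul_conjTranspose (Uᴴ * M)).eigenvalues_nonneg i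
  calc (Finset.univ.val : Multiset (Fin L)).map
        (fun i => Real.sqrt (1 - Real.sqrt
          ((Matrix.isHermitian_mul_conjTranspose_self (Uᴴ * M)).eigenvalues i) ^ 2))
      = (Finset.univ.val : Multiset (Fin L)).map
          (fun i => Real.sqrt (1 -
            (Matrix.isHermitian_mul_conjTranspose_self (Uᴴ * M)).eigenvalues i)) :=
        Multiset.map_congr rfl (fun i _ => by rw [Real.sq_sqrt (hnn i)])
    _ = ((Finset.univ.val : Multiset (Fin L)).map
          (Matrix.isHermitian_mul_conjTranspose_self (Uᴴ * M)).eigenvalues).map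
          (fun t => Real.sqrt (1 - t)) := by rw [Multiset.map_map]; rfl
    _ = ((Finset.univ.val : Multiset (Fin L)).map hGh.eigenvalues).map
          (fun t => Real.sqrt (1 - t)) := by rw [hm1]
    _ = ((Finset.univ.val : Multiset (Fin L)).map (fun i => 1 - hGh.eigenvalues i)).map
          Real.sqrt := by rw [Multiset.map_map, Multiset.map_map]; rfl
    _ = ((Finset.univ.val : Multiset (Fin L)).map hPPh.eigenvalues).map Real.sqrt := by
        rw [hm2]
    _ = svalsMultiset Pm := by
        simp only [svalsMultiset, Multiset.map_map]
        rfl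


end
end
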